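/- If G is a finite group, then every subsemigroup of ℕ × G is finitely generated. -/

import Mathlib

/-- `spow x n = x^(n+1)` in a semigroup. -/
private def spow {α : Type*} [Semigroup α] (x : α) : ℕ → α
  | 0 => x
  | n + 1 => spow x n * x

private lemma spow_mem {α : Type*} [Semigroup α] (S : Subsemigroup α)
    {x : α} (hx : x ∈ S) : ∀ n, spow x n ∈ S
  | 0 => hx
  | n + 1 => S.mul_mem (spow_mem S hx n) hx

private lemma spow_fst {α β : Type*} [Semigroup α] [Semigroup β] (x : α × β) :
    ∀ n, (spow x n).1 = spow x.1 n
  | 0 => rfl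
  | n + 1 => by simp [spow, spow_fst x n]

private lemma spow_snd {α β : Type*} [Semigroup α] [Semigroup β] (x : α × β) :
    ∀ n, (spow x n).2 = spow x.2 n
  | 0 => rfl
  | n + 1 => by simp [spow, spow_snd x n]

private lemma spow_eq_pow {α : Type*} [Monoid α] (x : α) :
    ∀ n, spow x n = x ^ (n + 1)
  | 0 => (pow_one x).symm
  | n + 1 => by rw [spow, spow_eq_pow x n, ← pow_succ]

private def pval (m : Multiplicative ℕ+) : ℕ := (Multiplicative.toAdd m : ℕ+)

private lemma pval_mul (x y : Multiplicative ℕ+) : pval (x * y) = pval x + pval y := by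
  simp [pval]

private lemma pval_spow (x : Multiplicative ℕ+) : ∀ n, pval (spow x n) = (n + 1) * pval x
  | 0 => (one_mul _).symm
  | n + 1 => by rw [spow, pval_mul, pval_spow x n]; ring

private lemma pval_pos (x : Multiplicative ℕ+) : 0 < pval x := (Multiplicative.toAdd x).pos

private lemma pval_injective : Function.Injective pval := by
  intro x y h
  exact Multiplicative.toAdd.injective (PNat.coe_injective h)

/-- If `G` is a finite group, then every subsemigroup of `ℕ × G` is finitely
generated. -/
theorem subsemigroup_of_N_times_finite_group_fg
    {G : Type*} [Group G] [Finite G]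
    (U : Subsemigroup (Multiplicative ℕ+ × G)) :
    ∃ X : Finset (Multiplicative ℕ+ × G),
      ↑X ⊆ (U : Set (Multiplicative ℕ+ × G)) ∧ Subsemigroup.closure ↑X = U := by
  classical
  by_cases hU : (U : Set (Multiplicative ℕ+ × G)).Nonempty
  swap
  · refine ⟨∅, by simp, ?_⟩
    rw [Finset.coe_empty, Subsemigroup.closure_empty]
    rw [Set.not_nonempty_iff_eq_empty] at hU
    ext x
    simp only [Subsemigroup.notMem_bot, false_iff]
    intro hx
    have : x ∈ (U : Set (Multiplicative ℕ+ × G)) := hx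
    simp [hU] at this
  obtain ⟨u₀, hu₀⟩ := hU
  set e := Monoid.exponent G with he
  have he1 : 1 ≤ e := Monoid.exponent_pos.2 Monoid.ExponentExists.of_finite
  set a₁ := spow u₀ (e - 1) with ha₁
  have ha₁U : a₁ ∈ U := spow_mem U hu₀ _
  have ha₁2 : a₁.2 = 1 := by
    rw [ha₁, spow_snd, spow_eq_pow, Nat.sub_add_cancel he1]
    exact Monoid.pow_exponent_eq_one u₀.2
  set A := pval a₁.1 with hA
  have hA1 : 0 < A := pval_pos _
  -- the set of elements of `U` minimal in their (column, residue class mod A)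
  set M : Set (Multiplicative ℕ+ × G) :=
    {u | u ∈ U ∧ ∀ w ∈ U, w.2 = u.2 → pval w.1 % A = pval u.1 % A →
      pval u.1 ≤ pval w.1} with hM
  have hMfin : M.Finite := by
    have hinj : Set.InjOn (fun u => (u.2, pval u.1 % A)) M := by
      rintro u ⟨huU, humin⟩ w ⟨hwU, hwmin⟩ h
      have h2 : u.2 = w.2 := congrArg Prod.fst h
      have hm : pval u.1 % A = pval w.1 % A := congrArg Prod.snd h
      have h1 : pval u.1 = pval w.1 :=
        le_antisymm (humin w hwU h2.symm hm.symm) (hwmin u huU h2 hm)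
      exact Prod.ext (pval_injective h1) h2
    refine Set.Finite.of_finite_image (Set.Finite.subset
      (Set.Finite.prod Set.finite_univ (Set.finite_Iio A)) ?_) hinj
    rintro p ⟨u, _, rfl⟩
    exact ⟨Set.mem_univ _, Nat.mod_lt _ hA1⟩
  refine ⟨hMfin.toFinset ∪ {a₁}, ?_, ?_⟩
  · intro x hx
    simp only [Finset.coe_union, Finset.coe_singleton, Set.mem_union,
      Set.Finite.coe_toFinset, Set.mem_singleton_iff] at hx
    rcases hx with hx | rfl
    · exact hx.1
    · exact ha₁U
  · apply le_antisymm
    · rw [Subsemigroup.closure_le]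
      intro x hx
      simp only [Finset.coe_union, Finset.coe_singleton, Set.mem_union,
        Set.Finite.coe_toFinset, Set.mem_singleton_iff] at hx
      rcases hx with hx | rfl
      · exact hx.1
      · exact ha₁U
    · intro u hu
      have hXa : a₁ ∈ (↑(hMfin.toFinset ∪ {a₁}) : Set (Multiplicative ℕ+ × G)) := by
        simp
      have hXM : ∀ w ∈ M, w ∈ (↑(hMfin.toFinset ∪ {a₁}) : Set (Multiplicative ℕ+ × G)) := by
        intro w hw; simp [hw]
      -- find the minimal element in the class of u
      have hP : ∃ k, ∃ w, w ∈ U ∧ w.2 = u.2 ∧ pval w.1 % A = pval u.1 % A ∧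
          pval w.1 = k := ⟨pval u.1, u, hu, rfl, rfl, rfl⟩
      obtain ⟨w, hwU, hw2, hwmod, hwfind⟩ := Nat.find_spec hP
      have hwle : pval w.1 ≤ pval u.1 := by
        rw [hwfind]; exact Nat.find_min' hP ⟨u, hu, rfl, rfl, rfl⟩
      have hwM : w ∈ M := by
        refine ⟨hwU, fun w' hw' h2 hmod => ?_⟩
        rw [hwfind]
        exact Nat.find_min' hP ⟨w', hw', h2.trans hw2, hmod.trans hwmod, rfl⟩
      have hdvd : A ∣ pval u.1 - pval w.1 := (Nat.modEq_iff_dvd' hwle).mp hwmod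
      rcases Nat.eq_or_lt_of_le hwle with heq | hlt
      · have : w = u := Prod.ext (pval_injective heq) hw2
        exact Subsemigroup.subset_closure (this ▸ hXM w hwM)
      · obtain ⟨q, hq⟩ := hdvd
        rw [Nat.mul_comm] at hq
        have hq1 : 1 ≤ q := by
          rcases Nat.eq_zero_or_pos q with rfl | h
          · omega
          · exact h
        have hdecomp : u = w * spow a₁ (q - 1) := by
          refine Prod.ext (pval_injective ?_) ?_
          · have h1 : (w * spow a₁ (q - 1)).1 = w.1 * spow a₁.1 (q - 1) := by
              simp [spow_fst]
            rw [h1, pval_mul, pval_spow, Nat.sub_add_cancel hq1, ← hA]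
            omega
          · have h2 : (w * spow a₁ (q - 1)).2 = w.2 * spow a₁.2 (q - 1) := by
              simp [spow_snd]
            rw [h2, ha₁2, spow_eq_pow, one_pow, mul_one, hw2]
        rw [hdecomp]
        exact Subsemigroup.mul_mem _ (Subsemigroup.subset_closure (hXM w hwM))
          (spow_mem _ (Subsemigroup.subset_closure hXa) _)
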